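/- For an image-finite LTS, two states x and y are apart (x # y) if and only if Spoiler has a winning strategy from the configuration [x,y] in the strong bisimulation game. -/

import Mathlib

/-- A symmetric relation `R` is a strong bisimulation on the LTS `(X, A, tr)`. -/
def IsBisimulation {X A : Type} (tr : X → A → X → Prop) (R : X → X → Prop) : Prop :=
  Symmetric R ∧ ∀ x y, R x y → ∀ a x', tr x a x' → ∃ y', tr y a y' ∧ R x' y'

/-- Strong bisimilarity: the union of all strong bisimulations. -/
def Bisimilar {X A : Type} (tr : X → A → X → Prop) (x y : X) : Prop :=
  ∃ R, IsBisimulation tr R ∧ R x y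

/-- A symmetric relation `R` is an apartness relation on the LTS `(X, A, tr)`. -/
def IsApartnessRel {X A : Type} (tr : X → A → X → Prop) (R : X → X → Prop) : Prop :=
  Symmetric R ∧ ∀ x y a x', tr x a x' → (∀ y', tr y a y' → R x' y') → R x y

/-- Apartness: the intersection of all apartness relations. -/
def Apart {X A : Type} (tr : X → A → X → Prop) (x y : X) : Prop :=
  ∀ R, IsApartnessRel tr R → R x y

/-- An LTS is image-finite if every state has finitely many `a`-successors, for each `a`. -/
def ImageFinite {X A : Type} (tr : X → A → X → Prop) : Prop :=
  ∀ x a, {x' | tr x a x'}.Finite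

/-- A step of a play that is consistent with the positional strategy `π` of the
player owning the configurations satisfying `own`. -/
def ConsStep {C : Type} (move : C → C → Prop) (own : C → Prop) (π : C → C)
    (c c' : C) : Prop :=
  move c c' ∧ (own c → c' = π c)

/-- A positional strategy is valid if it picks an actual move whenever one exists. -/
def ValidStrat {C : Type} (move : C → C → Prop) (own : C → Prop) (π : C → C) : Prop :=
  ∀ c, own c → (∃ c', move c c') → move c (π c)

/-- `c :: l` is a maximal finite play w.r.t. the step relation `R`:
it is a chain of `R`-steps that cannot be extended. -/
def MaxFinPlay {C : Type} (R : C → C → Prop) (c : C) (l : List C) : Prop :=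
  List.Chain R c l ∧ ∀ c', ¬ R ((c :: l).getLast (List.cons_ne_nil c l)) c'

/-- An infinite play from `c` consistent with the strategy. -/
def InfPlay {C : Type} (R : C → C → Prop) (c : C) (f : ℕ → C) : Prop :=
  f 0 = c ∧ ∀ i, R (f i) (f (i + 1))

/-- The positional Spoiler strategy `π` is winning from configuration `c`:
it is valid, admits no infinite consistent play from `c` (those are won by Duplicator),
and every maximal finite consistent play from `c` ends in a (stuck) configuration
owned by Duplicator. Here `isS c` says that `c` is a Spoiler configuration. -/
def SpoilerWinsFrom {C : Type} (move : C → C → Prop) (isS : C → Prop) (π : C → C)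
    (c : C) : Prop :=
  ValidStrat move isS π ∧
  (∀ f, ¬ InfPlay (ConsStep move isS π) c f) ∧
  (∀ l, MaxFinPlay (ConsStep move isS π) c l →
      ¬ isS ((c :: l).getLast (List.cons_ne_nil c l)))

/-- The positional Duplicator strategy `ρ` is winning from configuration `c`:
it is valid and every maximal finite consistent play from `c` ends in a (stuck)
configuration owned by Spoiler; infinite plays are won by Duplicator anyway. -/
def DuplicatorWinsFrom {C : Type} (move : C → C → Prop) (isS : C → Prop) (ρ : C → C)
    (c : C) : Prop :=
  ValidStrat move (fun c => ¬ isS c) ρ ∧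
  (∀ l, MaxFinPlay (ConsStep move (fun c => ¬ isS c) ρ) c l →
      isS ((c :: l).getLast (List.cons_ne_nil c l)))

/-- The moves of an alternating two-player game with Spoiler configurations `CS`,
Duplicator configurations `CD` (the configurations are `CS ⊕ CD`), Spoiler moves
`mS` and Duplicator moves `mD`. -/
def AltMove {CS CD : Type} (mS : CS → CD → Prop) (mD : CD → CS → Prop) :
    CS ⊕ CD → CS ⊕ CD → Prop
  | Sum.inl s, Sum.inr d => mS s d
  | Sum.inr d, Sum.inl s => mD d s
  | _, _ => False

/-- Spoiler configurations of the alternating game are the left injections. -/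
def AltIsS {CS CD : Type} : CS ⊕ CD → Prop := fun c => c.isLeft = true

/-- The winning region of Spoiler in the alternating game. -/
def SpoilerRegion {CS CD : Type} (mS : CS → CD → Prop) (mD : CD → CS → Prop) :
    Set CS :=
  {s | ∃ π, SpoilerWinsFrom (AltMove mS mD) AltIsS π (Sum.inl s)}

/-- The winning region of Duplicator in the alternating game. -/
def DuplicatorRegion {CS CD : Type} (mS : CS → CD → Prop) (mD : CD → CS → Prop) :
    Set CS :=
  {s | ∃ ρ, DuplicatorWinsFrom (AltMove mS mD) AltIsS ρ (Sum.inl s)}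

/-- Spoiler moves of the strong bisimulation game: from `[x,y]`, Spoiler picks a
transition `x →a x'` (moving to `⟨x,a,x',y⟩`) or `y →a y'` (moving to `⟨y,a,y',x⟩`). -/
def SBGmS {X A : Type} (tr : X → A → X → Prop) : X × X → X × A × X × X → Prop :=
  fun p q =>
    (∃ a x', q = (p.1, a, x', p.2) ∧ tr p.1 a x') ∨
    (∃ a y', q = (p.2, a, y', p.1) ∧ tr p.2 a y')

/-- Duplicator moves of the strong bisimulation game: from `⟨x,a,x',y⟩` Duplicator
moves to `[x',y']` whenever `y →a y'`. -/
def SBGmD {X A : Type} (tr : X → A → X → Prop) : X × A × X × X → X × X → Prop :=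
  fun q p => ∃ y', p = (q.2.2.1, y') ∧ tr q.2.2.2 q.2.1 y'

section ApartAux
variable {X A : Type}

def ApartN (tr : X → A → X → Prop) : ℕ → X → X → Prop
  | 0, _, _ => False
  | n+1, x, y =>
      (∃ a x', tr x a x' ∧ ∀ y', tr y a y' → ApartN tr n x' y') ∨
      (∃ a y', tr y a y' ∧ ∀ x', tr x a x' → ApartN tr n y' x')

variable {tr : X → A → X → Prop}

lemma apartN_mono : ∀ {m n : ℕ}, m ≤ n → ∀ {x y}, ApartN tr m x y → ApartN tr n x y := by
  intro m n h
  induction n generalizing m with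
  | zero =>
    intro x y hm
    obtain rfl : m = 0 := Nat.le_zero.mp h
    exact hm.elim
  | succ n ih =>
    intro x y hm
    cases m with
    | zero => exact hm.elim
    | succ m =>
      have hmn : m ≤ n := Nat.succ_le_succ_iff.mp h
      rcases hm with ⟨a, x', htr, hall⟩ | ⟨a, y', htr, hall⟩
      · exact Or.inl ⟨a, x', htr, fun y' hy' => ih hmn (hall y' hy')⟩
      · exact Or.inr ⟨a, y', htr, fun x' hx' => ih hmn (hall x' hx')⟩

lemma apartN_symm : ∀ {n : ℕ} {x y}, ApartN tr n x y → ApartN tr n y x := by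
  intro n x y h
  cases n with
  | zero => exact h.elim
  | succ n => exact Or.symm h

def Ap (tr : X → A → X → Prop) (x y : X) : Prop := ∃ n, ApartN tr n x y

lemma ap_symm : Symmetric (Ap tr) := fun _ _ ⟨n, hn⟩ => ⟨n, apartN_symm hn⟩

lemma apartN_apart : ∀ {n : ℕ} {x y}, ApartN tr n x y → Apart tr x y := by
  intro n
  induction n with
  | zero => exact fun h => h.elim
  | succ n ih =>
    intro x y hm R hR
    rcases hm with ⟨a, x', htr, hall⟩ | ⟨a, y', htr, hall⟩
    · exact hR.2 x y a x' htr (fun y' hy' => ih (hall y' hy') R hR)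
    · exact hR.1 (hR.2 y x a y' htr (fun x' hx' => ih (hall x' hx') R hR))

open Classical in
lemma ap_isApartness (h : ImageFinite tr) : IsApartnessRel tr (Ap tr) := by
  refine ⟨ap_symm, ?_⟩
  intro x y a x' htr hall
  have hfin := h y a
  obtain ⟨N, hN⟩ : ∃ N, ∀ y', tr y a y' → ApartN tr N x' y' := by
    classical
    refine ⟨hfin.toFinset.sup (fun y' => if hy : Ap tr x' y' then Nat.find hy else 0), ?_⟩
    intro y' hy'
    have hmem : y' ∈ hfin.toFinset := by simpa using hy'
    have hap : Ap tr x' y' := hall y' hy'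
    have hle := Finset.le_sup (f := fun y' => if hy : Ap tr x' y' then Nat.find hy else 0) hmem
    simp only [dif_pos hap] at hle
    exact apartN_mono hle (Nat.find_spec hap)
  exact ⟨N + 1, Or.inl ⟨a, x', htr, hN⟩⟩

lemma apart_iff_ap (h : ImageFinite tr) {x y : X} : Apart tr x y ↔ Ap tr x y :=
  ⟨fun ha => ha _ (ap_isApartness h), fun ⟨_, hn⟩ => apartN_apart hn⟩

end ApartAux

section GameAux

/-- Generic: a chain invariant propagates to the last element. -/
lemma chain_last_invariant {C : Type} {R : C → C → Prop} {P : C → Prop}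
    (hstep : ∀ a b, P a → R a b → P b) :
    ∀ (l : List C) (c : C), List.Chain R c l → P c →
      P ((c :: l).getLast (List.cons_ne_nil c l)) := by
  intro l
  induction l with
  | nil => intro c _ hc; simpa using hc
  | cons b t ih =>
    intro c hch hc
    obtain ⟨hcb, hbt⟩ := List.isChain_cons_cons.mp hch
    rw [List.getLast_cons (List.cons_ne_nil b t)]
    exact ih b hbt (hstep c b hc hcb)

/-- Turn reachability into a maximal-play-ready chain. -/
lemma reach_chain {C : Type} {R : C → C → Prop} {c c' : C}
    (h : Relation.ReflTransGen R c c') :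
    ∃ l, List.Chain R c l ∧ (c :: l).getLast (List.cons_ne_nil c l) = c' := by
  induction h using Relation.ReflTransGen.head_induction_on with
  | refl => exact ⟨[], List.Chain.nil, rfl⟩
  | head hab _ ih =>
    obtain ⟨l, hl, hlast⟩ := ih
    exact ⟨_ :: l, List.Chain.cons hab hl,
      by rw [List.getLast_cons (List.cons_ne_nil _ l)]; exact hlast⟩

/-- Dependent choice: iterate a step that preserves an invariant. -/
noncomputable def dcSeq {C : Type} {Inv : C → Prop} {step : C → C → Prop}
    (hnext : ∀ c, Inv c → ∃ c', step c c' ∧ Inv c') (c0 : C) (h0 : Inv c0) :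
    ℕ → {c : C // Inv c}
  | 0 => ⟨c0, h0⟩
  | n + 1 =>
    let p := dcSeq hnext c0 h0 n
    ⟨(hnext p.1 p.2).choose, (hnext p.1 p.2).choose_spec.2⟩

lemma dcSeq_step {C : Type} {Inv : C → Prop} {step : C → C → Prop}
    (hnext : ∀ c, Inv c → ∃ c', step c c' ∧ Inv c') (c0 : C) (h0 : Inv c0) (n : ℕ) :
    step (dcSeq hnext c0 h0 n).1 (dcSeq hnext c0 h0 (n + 1)).1 := by
  have h := (hnext (dcSeq hnext c0 h0 n).1 (dcSeq hnext c0 h0 n).2).choose_spec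
  exact h.1

lemma no_strict_desc (g : ℕ → ℕ) (h : ∀ i, g (i + 1) < g i) : False := by
  have key : ∀ i, g i + i ≤ g 0 := by
    intro i
    induction i with
    | zero => omega
    | succ i ih => have := h i; omega
  have := key (g 0 + 1)
  omega

end GameAux


section SBGAux
variable {X A : Type}

/-- The minimal apartness rank. -/
noncomputable def rk (tr : X → A → X → Prop) (u v : X) : ℕ :=
  sInf {n | ApartN tr n u v}

lemma pick_ex {tr : X → A → X → Prop} {u v : X} (h : Ap tr u v) :
    ∃ w : X × A × X × X, SBGmS tr (u, v) w ∧
      ∀ q', tr w.2.2.2 w.2.1 q' → Ap tr w.2.2.1 q' ∧ rk tr w.2.2.1 q' < rk tr u v := by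
  have hspec : ApartN tr (rk tr u v) u v := Nat.sInf_mem h
  cases hn : rk tr u v with
  | zero => rw [hn] at hspec; exact hspec.elim
  | succ n =>
    rw [hn] at hspec
    rcases hspec with ⟨a, x', htr, hall⟩ | ⟨a, y', htr, hall⟩
    · refine ⟨(u, a, x', v), Or.inl ⟨a, x', rfl, htr⟩, ?_⟩
      intro q' hq'
      have hA : ApartN tr n x' q' := hall q' hq'
      refine ⟨⟨n, hA⟩, ?_⟩
      have hle : rk tr x' q' ≤ n := Nat.sInf_le hA
      show rk tr x' q' < n + 1
      omega
    · refine ⟨(v, a, y', u), Or.inr ⟨a, y', rfl, htr⟩, ?_⟩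
      intro q' hq'
      have hA : ApartN tr n y' q' := hall q' hq'
      refine ⟨⟨n, hA⟩, ?_⟩
      have hle : rk tr y' q' ≤ n := Nat.sInf_le hA
      show rk tr y' q' < n + 1
      omega

open Classical in
/-- Spoiler's positional strategy built from apartness ranks. -/
noncomputable def spoilerStrat (tr : X → A → X → Prop) :
    (X × X) ⊕ (X × A × X × X) → (X × X) ⊕ (X × A × X × X) := fun c =>
  match c with
  | Sum.inl p =>
      if h : Ap tr p.1 p.2 then Sum.inr (pick_ex h).choose
      else if h2 : ∃ c', AltMove (SBGmS tr) (SBGmD tr) (Sum.inl p) c' then h2.choose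
      else Sum.inl p
  | Sum.inr w => Sum.inr w

lemma strat_ap {tr : X → A → X → Prop} {p : X × X} (h : Ap tr p.1 p.2) :
    spoilerStrat tr (Sum.inl p) = Sum.inr (pick_ex h).choose := by
  simp only [spoilerStrat]
  rw [dif_pos h]

/-- Invariant maintained by Spoiler's strategy along plays. -/
def GoodC (tr : X → A → X → Prop) : (X × X) ⊕ (X × A × X × X) → Prop
  | Sum.inl p => Ap tr p.1 p.2
  | Sum.inr w => ∀ q', tr w.2.2.2 w.2.1 q' → Ap tr w.2.2.1 q'

lemma good_step {tr : X → A → X → Prop} {c c'}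
    (hg : GoodC tr c)
    (hs : ConsStep (AltMove (SBGmS tr) (SBGmD tr)) AltIsS (spoilerStrat tr) c c') :
    GoodC tr c' := by
  obtain ⟨hm, hcons⟩ := hs
  cases c with
  | inl p =>
    have hap : Ap tr p.1 p.2 := hg
    have hc' : c' = Sum.inr (pick_ex hap).choose := by
      rw [hcons rfl, strat_ap hap]
    rw [hc']
    intro q' hq'
    exact ((pick_ex hap).choose_spec.2 q' hq').1
  | inr w =>
    cases c' with
    | inr w' => exact hm.elim
    | inl p =>
      have hm2 : SBGmD tr w p := hm
      obtain ⟨q', hpq, htr⟩ := hm2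
      subst hpq
      exact hg q' htr

lemma good_not_stuck {tr : X → A → X → Prop} {p : X × X} (hap : Ap tr p.1 p.2) :
    ConsStep (AltMove (SBGmS tr) (SBGmD tr)) AltIsS (spoilerStrat tr)
      (Sum.inl p) (spoilerStrat tr (Sum.inl p)) := by
  refine ⟨?_, fun _ => rfl⟩
  rw [strat_ap hap]
  exact (pick_ex hap).choose_spec.1

lemma two_step {tr : X → A → X → Prop} {p : X × X} (hap : Ap tr p.1 p.2) {d e}
    (h1 : ConsStep (AltMove (SBGmS tr) (SBGmD tr)) AltIsS (spoilerStrat tr) (Sum.inl p) d)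
    (h2 : ConsStep (AltMove (SBGmS tr) (SBGmD tr)) AltIsS (spoilerStrat tr) d e) :
    ∃ p' : X × X, e = Sum.inl p' ∧ Ap tr p'.1 p'.2 ∧ rk tr p'.1 p'.2 < rk tr p.1 p.2 := by
  obtain ⟨hm1, hcons1⟩ := h1
  have hd : d = Sum.inr (pick_ex hap).choose := by rw [hcons1 rfl, strat_ap hap]
  subst hd
  obtain ⟨hm2, -⟩ := h2
  cases e with
  | inr w' => exact hm2.elim
  | inl p' =>
    have hm2' : SBGmD tr (pick_ex hap).choose p' := hm2
    obtain ⟨q', hq, htr⟩ := hm2'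
    subst hq
    have hsp := (pick_ex hap).choose_spec.2 q' htr
    exact ⟨_, rfl, hsp.1, hsp.2⟩

/-- Invariant for the backward direction. -/
def NotQ (tr : X → A → X → Prop) (R : X → X → Prop) :
    (X × X) ⊕ (X × A × X × X) → Prop
  | Sum.inl p => ¬ R p.1 p.2
  | Sum.inr w => ¬ R w.1 w.2.2.2 ∧ tr w.1 w.2.1 w.2.2.1

end SBGAux

/-- Two states of an image-finite LTS are apart iff Spoiler has a winning strategy
from `[x,y]` in the strong bisimulation game. -/
theorem apart_iff_spoiler_wins {X A : Type} (tr : X → A → X → Prop)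
    (h : ImageFinite tr) (x y : X) :
    Apart tr x y ↔ (x, y) ∈ SpoilerRegion (SBGmS tr) (SBGmD tr) := by
  constructor
  · -- Apartness implies Spoiler wins, with the rank-based strategy
    intro hap0
    have hap' : Ap tr x y := (apart_iff_ap h).mp hap0
    refine ⟨spoilerStrat tr, ?_, ?_, ?_⟩
    · -- validity
      intro c hS hex
      cases c with
      | inr w => exact absurd hS (by simp [AltIsS])
      | inl p =>
        by_cases hA : Ap tr p.1 p.2
        · rw [strat_ap hA]
          exact (pick_ex hA).choose_spec.1
        · simp only [spoilerStrat]
          rw [dif_neg hA, dif_pos hex]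
          exact hex.choose_spec
    · -- no infinite consistent play
      rintro f ⟨hf0, hfs⟩
      have claim : ∀ i, ∃ p : X × X, f (2 * i) = Sum.inl p ∧ Ap tr p.1 p.2 := by
        intro i
        induction i with
        | zero => exact ⟨(x, y), by simpa using hf0, hap'⟩
        | succ i ih =>
          obtain ⟨p, hp, hpap⟩ := ih
          have h1 := hfs (2 * i); rw [hp] at h1
          have h2 := hfs (2 * i + 1)
          obtain ⟨p', he, hap2, _⟩ := two_step hpap h1 h2
          exact ⟨p', by rw [show 2 * (i + 1) = 2 * i + 1 + 1 by omega]; exact he, hap2⟩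
      have dec : ∀ i,
          Sum.elim (fun p : X × X => rk tr p.1 p.2) (fun _ => 0) (f (2 * (i + 1))) <
          Sum.elim (fun p : X × X => rk tr p.1 p.2) (fun _ => 0) (f (2 * i)) := by
        intro i
        obtain ⟨p, hp, hpap⟩ := claim i
        have h1 := hfs (2 * i); rw [hp] at h1
        have h2 := hfs (2 * i + 1)
        obtain ⟨p', he, _, hlt⟩ := two_step hpap h1 h2
        rw [hp, show 2 * (i + 1) = 2 * i + 1 + 1 by omega, he]
        simpa using hlt
      exact no_strict_desc (fun i => Sum.elim (fun p : X × X => rk tr p.1 p.2) (fun _ => 0) (f (2 * i))) dec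
    · -- maximal finite plays end in a Duplicator configuration
      intro l hml hS
      have hgood := chain_last_invariant (fun a b => good_step) l _ hml.1 hap'
      set L := ((Sum.inl (x, y) :: l).getLast (List.cons_ne_nil _ l)) with hL
      cases hcL : L with
      | inr w => rw [hcL] at hS; simp [AltIsS] at hS
      | inl p =>
        rw [hcL] at hgood
        have hapL : Ap tr p.1 p.2 := hgood
        have hstep := good_not_stuck hapL
        have := hml.2 (spoilerStrat tr (Sum.inl p))
        rw [← hL, hcL] at this
        exact this hstep
  · -- Spoiler wins implies apartness
    rintro ⟨π, hval, hinf, hmax⟩ R hR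
    by_contra hRxy
    set M := AltMove (SBGmS tr) (SBGmD tr) with hM
    set S := ConsStep M AltIsS π with hS
    have hnext : ∀ c, (Relation.ReflTransGen S (Sum.inl (x, y)) c ∧ NotQ tr R c) →
        ∃ c', S c c' ∧ (Relation.ReflTransGen S (Sum.inl (x, y)) c' ∧ NotQ tr R c') := by
      rintro c ⟨hreach, hq⟩
      cases c with
      | inl p =>
        have hq' : ¬ R p.1 p.2 := hq
        have hex : ∃ d, M (Sum.inl p) d := by
          by_contra hno
          push_neg at hno
          obtain ⟨l, hch, hlast⟩ := reach_chain hreach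
          have hmfp : MaxFinPlay S (Sum.inl (x, y)) l := by
            refine ⟨hch, ?_⟩
            intro c' hc'
            rw [hlast] at hc'
            exact hno c' hc'.1
          have hend := hmax l hmfp
          rw [hlast] at hend
          exact hend rfl
        have hm := hval (Sum.inl p) (by simp [AltIsS]) hex
        cases hπ : π (Sum.inl p) with
        | inl p2 => rw [hπ] at hm; exact hm.elim
        | inr w =>
          rw [hπ] at hm
          refine ⟨Sum.inr w, ⟨hm, fun _ => hπ.symm⟩, hreach.tail ⟨hm, fun _ => hπ.symm⟩, ?_⟩
          have hm2 : SBGmS tr p w := hm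
          rcases hm2 with ⟨a, x', hw, htr⟩ | ⟨a, y', hw, htr⟩
          · subst hw; exact ⟨hq', htr⟩
          · subst hw; exact ⟨fun hr => hq' (hR.1 hr), htr⟩
      | inr w =>
        obtain ⟨hnR, htr⟩ := hq
        have hne : ¬ ∀ q', tr w.2.2.2 w.2.1 q' → R w.2.2.1 q' :=
          fun hall => hnR (hR.2 _ _ _ _ htr hall)
        push_neg at hne
        obtain ⟨q', htr', hnR'⟩ := hne
        have hmove : M (Sum.inr w) (Sum.inl (w.2.2.1, q')) := ⟨q', rfl, htr'⟩
        have hstep : S (Sum.inr w) (Sum.inl (w.2.2.1, q')) :=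
          ⟨hmove, fun habs => absurd habs (by simp [AltIsS])⟩
        exact ⟨Sum.inl (w.2.2.1, q'), hstep, hreach.tail hstep, hnR'⟩
    have h0 : Relation.ReflTransGen S (Sum.inl (x, y)) (Sum.inl (x, y)) ∧
        NotQ tr R (Sum.inl (x, y)) := ⟨Relation.ReflTransGen.refl, hRxy⟩
    exact hinf (fun n => (dcSeq hnext (Sum.inl (x, y)) h0 n).1)
      ⟨rfl, fun i => dcSeq_step hnext _ _ i⟩
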